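/- Fix k > 0 and α ≥ 0. For e > 0 let φ_e be the cubic φ_e(r) = C₃(e)(r−e)³ + C₂(e)(r−e)² + (1/2)sinh(e/2)(r−e) + cosh(e/2) with C₂, C₃ as in the Hermite interpolation between cosh(r/2) and cosh(r) on [e, (k+1)e]. Then the limit as e → 0⁺ of the second derivative φ_e′′(e(1+α)) = 6C₃(e)·αe + 2C₂(e) equals −(9(k+1)/(2k³))·α + (4k²+12k+9)/(4k²). -/

import Mathlib

open Filter Real

lemma aux_sinh (c : ℝ) :
    Filter.Tendsto (fun e : ℝ => Real.sinh (c * e) / e)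
      (nhdsWithin 0 (Set.Ioi 0)) (nhds c) := by
  have h1 : HasDerivAt (fun e : ℝ => c * e) c 0 := by
    simpa using (hasDerivAt_id (0 : ℝ)).const_mul c
  have hd : HasDerivAt (fun e : ℝ => Real.sinh (c * e)) c 0 := by
    have := (Real.hasDerivAt_sinh (c * 0)).comp 0 h1
    simp only [mul_zero, Real.cosh_zero, one_mul] at this
    exact this
  have h := hasDerivAt_iff_tendsto_slope.mp hd
  have h' := h.mono_left (nhdsWithin_mono 0 (by intro x hx; exact ne_of_gt hx))
  refine h'.congr ?_
  intro e
  simp [slope_def_field, div_eq_inv_mul]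

lemma aux_cosh (c : ℝ) :
    Filter.Tendsto (fun e : ℝ => (Real.cosh (c * e) - 1) / e ^ 2)
      (nhdsWithin 0 (Set.Ioi 0)) (nhds (c ^ 2 / 2)) := by
  have h := ((aux_sinh (c / 2)).mul (aux_sinh (c / 2))).const_mul 2
  have hval : (2 : ℝ) * (c / 2 * (c / 2)) = c ^ 2 / 2 := by ring
  rw [hval] at h
  refine h.congr ?_
  intro e
  have : Real.cosh (c * e) - 1 = 2 * Real.sinh (c / 2 * e) ^ 2 := by
    have h2 : Real.cosh (2 * (c / 2 * e))
        = Real.cosh (c / 2 * e) ^ 2 + Real.sinh (c / 2 * e) ^ 2 :=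
      Real.cosh_two_mul _
    have h3 : Real.cosh (c / 2 * e) ^ 2 = Real.sinh (c / 2 * e) ^ 2 + 1 :=
      Real.cosh_sq _
    have h4 : (2 : ℝ) * (c / 2 * e) = c * e := by ring
    rw [h4] at h2
    rw [h2, h3]; ring
  rw [this]
  ring

/-- As e → 0⁺, the second derivative φ_e′′(e(1+α)) = 6C₃(e)·αe + 2C₂(e) tends to
−(9(k+1)/(2k³))α + (4k²+12k+9)/(4k²). -/
theorem stmt_11 (k α : ℝ) (hk : 0 < k) (hα : 0 ≤ α) :
    Filter.Tendsto
      (fun e : ℝ =>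
        6 * ((1/(k*e)^2) * (Real.sinh ((k+1)*e) + (1/2) * Real.sinh (e/2))
            + (1/(k*e)^3) * (2 * Real.cosh (e/2) - 2 * Real.cosh ((k+1)*e)))
          * (α * e)
        + 2 * (-(1/(k*e)) * (Real.sinh ((k+1)*e) + Real.sinh (e/2))
            + (3/(k*e)^2) * (Real.cosh ((k+1)*e) - Real.cosh (e/2))))
      (nhdsWithin 0 (Set.Ioi 0))
      (nhds (-(9*(k+1)/(2*k^3)) * α + (4*k^2+12*k+9)/(4*k^2))) := by
  have hk0 : (k : ℝ) ≠ 0 := ne_of_gt hk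
  have ha1 := aux_sinh (k + 1)
  have ha2 : Filter.Tendsto (fun e : ℝ => Real.sinh (e / 2) / e)
      (nhdsWithin 0 (Set.Ioi 0)) (nhds (1 / 2 : ℝ)) := by
    have := aux_sinh (1 / 2)
    refine this.congr fun e => ?_
    rw [show (1 / 2 : ℝ) * e = e / 2 by ring]
  have hb1 := aux_cosh (k + 1)
  have hb2 : Filter.Tendsto (fun e : ℝ => (Real.cosh (e / 2) - 1) / e ^ 2)
      (nhdsWithin 0 (Set.Ioi 0)) (nhds ((1 / 2 : ℝ) ^ 2 / 2)) := by
    have := aux_cosh (1 / 2)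
    refine this.congr fun e => ?_
    rw [show (1 / 2 : ℝ) * e = e / 2 by ring]
  -- build the combined limit
  have t1 := ha1.div_const (k ^ 2)
  have t2 := ha2.div_const (2 * k ^ 2)
  have t3 := (((hb2.const_mul 2).sub (hb1.const_mul 2)).div_const (k ^ 3))
  have part1 := ((t1.add t2).add t3).const_mul (6 * α)
  have part2a := (ha1.add ha2).const_mul (-2 / k)
  have part2b := (hb1.sub hb2).const_mul (6 / k ^ 2)
  have final := part1.add (part2a.add part2b)
  have hval : (-(9*(k+1)/(2*k^3)) * α + (4*k^2+12*k+9)/(4*k^2))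
      = 6 * α * ((k + 1) / k ^ 2 + 1 / 2 / (2 * k ^ 2)
          + (2 * ((1/2:ℝ)^2/2) - 2 * ((k+1)^2/2)) / k ^ 3)
        + (-2 / k * ((k + 1) + 1 / 2) + 6 / k ^ 2 * ((k+1)^2/2 - (1/2:ℝ)^2/2)) := by
    field_simp
    ring
  rw [hval]
  refine final.congr' ?_
  filter_upwards [self_mem_nhdsWithin] with e he
  have he0 : e ≠ 0 := ne_of_gt he
  field_simp
  ring
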